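/- Let σ be an ergodic P-preserving transformation of a probability space (Ω, F, P) and let n ∈ ℕ. Then there exists k dividing n and a σⁿ-invariant measurable set Z ⊆ Ω with P(Z) = 1/k such that Ω = ⋃_{ℓ=0}^{k-1} σ^{-ℓ} Z (up to null sets) and σⁿ restricted to Z is ergodic with respect to the normalized measure k·P|_Z. -/

import Mathlib

open MeasureTheory Filter Set
open scoped ENNReal

namespace Stmt2Aux

variable {Ω : Type*} [MeasurableSpace Ω] {P : Measure Ω} [IsProbabilityMeasure P]
  {σ : Ω → Ω}

/-- Preimage under a measure-preserving iterate respects a.e. equality of sets. -/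
lemma preim_ae (hmp : MeasurePreserving σ P P) (j : ℕ) {X Y : Set Ω}
    (hX : MeasurableSet X) (hY : MeasurableSet Y) (h : X =ᵐ[P] Y) :
    (σ^[j]) ⁻¹' X =ᵐ[P] (σ^[j]) ⁻¹' Y := by
  rw [MeasureTheory.ae_eq_set] at h ⊢
  rw [← Set.preimage_diff, ← Set.preimage_diff,
    (hmp.iterate j).measure_preimage (hX.diff hY).nullMeasurableSet,
    (hmp.iterate j).measure_preimage (hY.diff hX).nullMeasurableSet]
  exact h

/-- Preimage under a measure-preserving iterate reflects a.e. equality of sets. -/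
lemma reflect_ae (hmp : MeasurePreserving σ P P) (j : ℕ) {X Y : Set Ω}
    (hX : MeasurableSet X) (hY : MeasurableSet Y)
    (h : (σ^[j]) ⁻¹' X =ᵐ[P] (σ^[j]) ⁻¹' Y) : X =ᵐ[P] Y := by
  rw [MeasureTheory.ae_eq_set] at h ⊢
  rw [← Set.preimage_diff, ← Set.preimage_diff,
    (hmp.iterate j).measure_preimage (hX.diff hY).nullMeasurableSet,
    (hmp.iterate j).measure_preimage (hY.diff hX).nullMeasurableSet] at h
  exact h

lemma preim_index_eq (f : Ω → Ω) {a b : ℕ} (h : a = b) (X : Set Ω) :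
    (f^[a]) ⁻¹' X = (f^[b]) ⁻¹' X := by rw [h]

lemma iter_pred (f : Ω → Ω) {j : ℕ} (hj : 0 < j) (x : Ω) : f^[j-1] (f x) = f^[j] x := by
  conv_rhs => rw [show j = (j-1)+1 from (Nat.succ_pred_eq_of_pos hj).symm]
  rw [Function.iterate_succ_apply]

/-- Quantization: a σⁿ-a.e.-invariant set has measure a multiple of 1/n. -/
lemma quant (hσ : Ergodic σ P) {n : ℕ} {A : Set Ω} (hA : MeasurableSet A)
    (hinv : (σ^[n]) ⁻¹' A =ᵐ[P] A) : ∃ m : ℕ, (n : ℝ≥0∞) * P A = m := by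
  classical
  set g : Ω → ℕ := fun x => ∑ j ∈ Finset.range n, if σ^[j] x ∈ A then 1 else 0 with hg
  have hmeasiter : ∀ j : ℕ, MeasurableSet ((σ^[j]) ⁻¹' A) := fun j =>
    (hσ.toMeasurePreserving.measurable.iterate j) hA
  have hgmeas : Measurable g := by
    apply Finset.measurable_sum
    intro j _
    exact Measurable.ite (hmeasiter j) measurable_const measurable_const
  have hginv : g ∘ σ =ᵐ[P] g := by
    filter_upwards [Filter.eventuallyEq_set.mp hinv] with x hx
    simp only [Set.mem_preimage] at hx
    show g (σ x) = g x
    have h1 : ∀ j, (if σ^[j] (σ x) ∈ A then (1:ℕ) else 0)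
        = if σ^[j+1] x ∈ A then 1 else 0 := by
      intro j; rw [Function.iterate_succ_apply]
    have key : g (σ x) + (if σ^[0] x ∈ A then (1:ℕ) else 0)
        = g x + (if σ^[n] x ∈ A then 1 else 0) := by
      simp only [hg, h1]
      rw [← Finset.sum_range_succ' (fun j => if σ^[j] x ∈ A then (1:ℕ) else 0) n,
        Finset.sum_range_succ]
    have h2 : (if σ^[n] x ∈ A then (1:ℕ) else 0) = if σ^[0] x ∈ A then 1 else 0 := by
      simp only [Function.iterate_zero_apply]
      exact if_congr hx rfl rfl
    omega
  obtain ⟨c, hc⟩ := hσ.ae_eq_const_of_ae_eq_comp₀ hgmeas.nullMeasurable hginv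
  refine ⟨c, ?_⟩
  have h1 : ∫⁻ x, (g x : ℝ≥0∞) ∂P = (n : ℝ≥0∞) * P A := by
    have heq : ∀ x, (g x : ℝ≥0∞)
        = ∑ j ∈ Finset.range n, ((σ^[j]) ⁻¹' A).indicator (fun _ => (1:ℝ≥0∞)) x := by
      intro x
      rw [hg]
      push_cast
      refine Finset.sum_congr rfl fun j _ => ?_
      simp [Set.indicator_apply, Set.mem_preimage, apply_ite (Nat.cast : ℕ → ℝ≥0∞)]
    simp only [heq]
    rw [lintegral_finset_sum _ (fun j _ => (measurable_const.indicator (hmeasiter j)))]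
    have : ∀ j ∈ Finset.range n,
        ∫⁻ x, ((σ^[j]) ⁻¹' A).indicator (fun _ => (1:ℝ≥0∞)) x ∂P = P A := by
      intro j _
      rw [lintegral_indicator_const (hmeasiter j), one_mul,
        (hσ.toMeasurePreserving.iterate j).measure_preimage hA.nullMeasurableSet]
    rw [Finset.sum_congr rfl this, Finset.sum_const, Finset.card_range, nsmul_eq_mul]
  have h2 : ∫⁻ x, (g x : ℝ≥0∞) ∂P = c := by
    have : (fun x => (g x : ℝ≥0∞)) =ᵐ[P] fun _ => (c : ℝ≥0∞) :=
      hc.mono fun x hx => by simp [hx, Function.const]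
    rw [lintegral_congr_ae this, lintegral_const, measure_univ, mul_one]
  rw [← h1, h2]

end Stmt2Aux

open Stmt2Aux

theorem stmt2 {Ω : Type*} [MeasurableSpace Ω] (P : Measure Ω) [IsProbabilityMeasure P]
    (σ : Ω → Ω) (hσ : Ergodic σ P) (hbij : Function.Bijective σ) (n : ℕ) (hn : 0 < n) :
    ∃ k : ℕ, k ∣ n ∧ ∃ Z : Set Ω, MeasurableSet Z ∧ P Z = 1 / k ∧
      ((σ^[n]) ⁻¹' Z : Set Ω) =ᵐ[P] Z ∧
      P ((⋃ ℓ ∈ Finset.range k, (σ^[ℓ]) ⁻¹' Z)ᶜ) = 0 ∧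
      Ergodic (σ^[n]) ((k : ENNReal) • P.restrict Z) := by
  classical
  have hmp : MeasurePreserving σ P P := hσ.toMeasurePreserving
  have hmeas : Measurable σ := hmp.measurable
  have hmeasiter : ∀ (j : ℕ) {X : Set Ω}, MeasurableSet X → MeasurableSet ((σ^[j]) ⁻¹' X) :=
    fun j X hX => (hmeas.iterate j) hX
  -- the quantized measure values of invariant sets of positive measure
  set Q : ℕ → Prop := fun m => ∃ A : Set Ω, MeasurableSet A ∧ ((σ^[n]) ⁻¹' A =ᵐ[P] A) ∧
    0 < P A ∧ (n : ℝ≥0∞) * P A = m with hQ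
  have hQn : Q n := by
    refine ⟨Set.univ, MeasurableSet.univ, by simp, by simp, by simp⟩
  have hQex : ∃ m, Q m := ⟨n, hQn⟩
  set m₀ : ℕ := Nat.find hQex with hm₀
  obtain ⟨A, hA, hAinv, hApos, hAval⟩ : Q m₀ := Nat.find_spec hQex
  have hAfin : ∀ X : Set Ω, P X ≠ ∞ := fun X => (measure_lt_top P X).ne
  -- minimality
  have hmin : ∀ B : Set Ω, MeasurableSet B → ((σ^[n]) ⁻¹' B =ᵐ[P] B) → 0 < P B →
      (n : ℝ≥0∞) * P A ≤ (n : ℝ≥0∞) * P B := by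
    intro B hB hBinv hBpos
    obtain ⟨m, hm⟩ := quant hσ hB hBinv
    have : m₀ ≤ m := Nat.find_min' hQex ⟨B, hB, hBinv, hBpos, hm⟩
    rw [hAval, hm]
    exact_mod_cast this
  -- atom property
  have atom : ∀ A' : Set Ω, MeasurableSet A' → ((σ^[n]) ⁻¹' A' =ᵐ[P] A') → P A' = P A →
      ∀ B : Set Ω, MeasurableSet B → ((σ^[n]) ⁻¹' B =ᵐ[P] B) →
      P (A' ∩ B) = 0 ∨ P (A' \ B) = 0 := by
    intro A' hA'm hA'inv hA'eq B hBm hBinv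
    by_cases hC : P (A' ∩ B) = 0
    · exact Or.inl hC
    right
    have hCm : MeasurableSet (A' ∩ B) := hA'm.inter hBm
    have hCinv : ((σ^[n]) ⁻¹' (A' ∩ B) : Set Ω) =ᵐ[P] ((A' ∩ B : Set Ω)) := by
      rw [Set.preimage_inter]
      exact MeasureTheory.ae_eq_set_inter hA'inv hBinv
    have hn0 : (n : ℝ≥0∞) ≠ 0 := Nat.cast_ne_zero.mpr hn.ne'
    have hninf : (n : ℝ≥0∞) ≠ ∞ := ENNReal.natCast_ne_top n
    have h1 : (n : ℝ≥0∞) * P A' ≤ (n : ℝ≥0∞) * P (A' ∩ B) := by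
      rw [hA'eq]
      exact hmin _ hCm hCinv (pos_iff_ne_zero.mpr hC)
    have h2 : (n : ℝ≥0∞) * P (A' ∩ B) ≤ (n : ℝ≥0∞) * P A' :=
      mul_le_mul_right (measure_mono Set.inter_subset_left) _
    have heq : P (A' ∩ B) = P A' :=
      (ENNReal.mul_right_inj hn0 hninf).mp (le_antisymm h2 h1)
    have hdiff : P (A' \ B) = P A' - P (A' ∩ B) := by
      rw [← Set.diff_self_inter]
      exact measure_diff Set.inter_subset_left hCm.nullMeasurableSet (hAfin _)
    rw [hdiff, heq, tsub_self]
  -- invariance of iterated preimages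
  have hiterinv : ∀ j : ℕ, (σ^[n]) ⁻¹' ((σ^[j]) ⁻¹' A) =ᵐ[P] (σ^[j]) ⁻¹' A := by
    intro j
    have hcomm : (σ^[n]) ⁻¹' ((σ^[j]) ⁻¹' A) = (σ^[j]) ⁻¹' ((σ^[n]) ⁻¹' A) := by
      rw [← Set.preimage_comp, ← Set.preimage_comp, ← Function.iterate_add,
        ← Function.iterate_add, Nat.add_comm]
    rw [hcomm]
    exact preim_ae hmp j (hmeasiter n hA) hA hAinv
  have hitermeas : ∀ j : ℕ, P ((σ^[j]) ⁻¹' A) = P A := fun j =>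
    (hmp.iterate j).measure_preimage hA.nullMeasurableSet
  -- the period k
  set Q' : ℕ → Prop := fun j => 0 < j ∧ (σ^[j]) ⁻¹' A =ᵐ[P] A with hQ'
  have hQ'ex : ∃ j, Q' j := ⟨n, hn, hAinv⟩
  set k : ℕ := Nat.find hQ'ex with hk
  obtain ⟨hkpos, hkinv⟩ : Q' k := Nat.find_spec hQ'ex
  have hkmin : ∀ j, 0 < j → j < k → ¬ ((σ^[j]) ⁻¹' A =ᵐ[P] A) := by
    intro j hj hjk hcon
    exact (Nat.find_min hQ'ex hjk) ⟨hj, hcon⟩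
  -- multiples of k
  have hmult : ∀ q : ℕ, (σ^[q * k]) ⁻¹' A =ᵐ[P] A := by
    intro q
    induction q with
    | zero => simp; exact ae_eq_refl _
    | succ q ih =>
      have : (σ^[(q + 1) * k]) ⁻¹' A = (σ^[k]) ⁻¹' ((σ^[q * k]) ⁻¹' A) := by
        rw [← Set.preimage_comp, ← Function.iterate_add]
        exact preim_index_eq σ (by ring) A
      rw [this]
      exact ((preim_ae hmp k (hmeasiter _ hA) hA ih)).trans hkinv
  -- k divides n
  have hdvd : k ∣ n := by
    have hrinv : (σ^[n % k]) ⁻¹' A =ᵐ[P] A := by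
      have hsplit : (σ^[n]) ⁻¹' A = (σ^[n % k]) ⁻¹' ((σ^[n / k * k]) ⁻¹' A) := by
        rw [← Set.preimage_comp, ← Function.iterate_add]
        exact preim_index_eq σ (Nat.div_add_mod' n k).symm A
      have h1 : (σ^[n]) ⁻¹' A =ᵐ[P] (σ^[n % k]) ⁻¹' A := by
        rw [hsplit]
        exact preim_ae hmp _ (hmeasiter _ hA) hA (hmult _)
      exact (h1.symm.trans hAinv)
    rcases Nat.eq_zero_or_pos (n % k) with h | h
    · exact Nat.dvd_of_mod_eq_zero h
    · exact absurd hrinv (hkmin _ h (Nat.mod_lt _ hkpos))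
  -- pairwise a.e. disjointness
  have hdisj : ∀ i j, i < k → j < k → i ≠ j →
      P ((σ^[i]) ⁻¹' A ∩ (σ^[j]) ⁻¹' A) = 0 := by
    have key : ∀ i j, i < j → j < k → P ((σ^[i]) ⁻¹' A ∩ (σ^[j]) ⁻¹' A) = 0 := by
      intro i j hij hjk
      by_contra hpos
      have h1 := atom _ (hmeasiter i hA) (hiterinv i) (hitermeas i) _ (hmeasiter j hA)
        (hiterinv j)
      have h2 := atom _ (hmeasiter j hA) (hiterinv j) (hitermeas j) _ (hmeasiter i hA)
        (hiterinv i)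
      have hd1 : P ((σ^[i]) ⁻¹' A \ (σ^[j]) ⁻¹' A) = 0 := h1.resolve_left hpos
      have hd2 : P ((σ^[j]) ⁻¹' A \ (σ^[i]) ⁻¹' A) = 0 := by
        refine h2.resolve_left ?_
        rwa [Set.inter_comm]
      have haeeq : (σ^[i]) ⁻¹' A =ᵐ[P] (σ^[j]) ⁻¹' A :=
        MeasureTheory.ae_eq_set.mpr ⟨hd1, hd2⟩
      have hnest : (σ^[j]) ⁻¹' A = (σ^[i]) ⁻¹' ((σ^[j - i]) ⁻¹' A) := by
        rw [← Set.preimage_comp, ← Function.iterate_add]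
        exact preim_index_eq σ (by omega) A
      have haeeq2 : (σ^[i]) ⁻¹' A =ᵐ[P] (σ^[i]) ⁻¹' ((σ^[j - i]) ⁻¹' A) := by
        rw [← hnest]; exact haeeq
      have hfin : A =ᵐ[P] (σ^[j - i]) ⁻¹' A :=
        reflect_ae hmp i hA (hmeasiter _ hA) haeeq2
      exact hkmin (j - i) (by omega) (by omega) hfin.symm
    intro i j hik hjk hij
    rcases lt_or_gt_of_ne hij with h | h
    · exact key i j h hjk
    · rw [Set.inter_comm]
      exact key j i h hik
  -- the union U
  set U : Set Ω := ⋃ ℓ ∈ Finset.range k, (σ^[ℓ]) ⁻¹' A with hUdef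
  have hUm : MeasurableSet U := by
    exact MeasurableSet.biUnion (Finset.range k).countable_toSet
      (fun ℓ _ => hmeasiter ℓ hA)
  have hA0 : (σ^[0]) ⁻¹' A = A := by simp
  have hAsubU : A ⊆ U := by
    intro x hx
    exact Set.mem_biUnion (by simp [hkpos] : (0 : ℕ) ∈ Finset.range k)
      (by simpa [hA0] using hx)
  have hk0null : P ((σ^[k]) ⁻¹' A \ A) = 0 := (MeasureTheory.ae_eq_set.mp hkinv).1
  have h0knull : P (A \ (σ^[k]) ⁻¹' A) = 0 := (MeasureTheory.ae_eq_set.mp hkinv).2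
  set W : Set Ω := U ∪ (σ^[k]) ⁻¹' A with hWdef
  have hUW : U =ᵐ[P] W := by
    rw [MeasureTheory.ae_eq_set]
    constructor
    · rw [Set.diff_eq_empty.mpr Set.subset_union_left]
      exact measure_empty
    · refine measure_mono_null (fun x hx => ?_) hk0null
      rcases hx with ⟨hxW, hxU⟩
      rcases hxW with hxU' | hxk
      · exact absurd hxU' hxU
      · exact ⟨hxk, fun hxA => hxU (hAsubU hxA)⟩
  have hpreU : σ ⁻¹' U =ᵐ[P] W := by
    have hsub : σ ⁻¹' U ⊆ W := by
      intro x hx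
      simp only [hUdef, Set.mem_preimage, Set.mem_iUnion, Finset.mem_range] at hx
      obtain ⟨ℓ, hℓ, hxA⟩ := hx
      have hx1 : x ∈ (σ^[ℓ + 1]) ⁻¹' A := by
        simpa [Function.iterate_succ_apply] using hxA
      rcases Nat.lt_or_ge (ℓ + 1) k with h | h
      · left
        exact Set.mem_biUnion (Finset.mem_range.mpr h) hx1
      · right
        have : ℓ + 1 = k := by omega
        rwa [← this]
    rw [MeasureTheory.ae_eq_set]
    constructor
    · rw [Set.diff_eq_empty.mpr hsub]
      exact measure_empty
    · refine measure_mono_null (fun x hx => ?_) h0knull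
      rcases hx with ⟨hxW, hxp⟩
      have hxknot : x ∉ (σ^[k]) ⁻¹' A := by
        intro hxk
        apply hxp
        simp only [Set.mem_preimage]
        have : σ^[k - 1] (σ x) ∈ A := by
          rw [iter_pred σ hkpos]
          exact hxk
        exact Set.mem_biUnion (Finset.mem_range.mpr (by omega : k - 1 < k))
          (by simpa using this)
      rcases hxW with hxU | hxk
      · simp only [hUdef, Set.mem_iUnion, Finset.mem_range] at hxU
        obtain ⟨ℓ, hℓ, hxA⟩ := hxU
        rcases Nat.eq_zero_or_pos ℓ with h0 | h0
        · subst h0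
          exact ⟨by simpa [hA0] using hxA, hxknot⟩
        · exfalso
          apply hxp
          simp only [Set.mem_preimage]
          have hst : σ^[ℓ - 1] (σ x) = σ^[ℓ] x := iter_pred σ h0 x
          exact Set.mem_biUnion (Finset.mem_range.mpr (by omega : ℓ - 1 < k))
            (by simp only [Set.mem_preimage]; rw [hst]; exact hxA)
      · exact absurd hxk hxknot
  have hUinv : σ ⁻¹' U =ᵐ[P] U := hpreU.trans hUW.symm
  -- U has full measure
  have hUfull : P Uᶜ = 0 := by
    rcases hσ.quasiErgodic.ae_empty_or_univ₀ hUm.nullMeasurableSet hUinv with h | h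
    · exfalso
      have : P U = 0 := ae_eq_empty.mp h
      exact absurd (measure_mono_null (fun x hx => hAsubU hx) this) hApos.ne'
    · exact ae_eq_univ.mp h
  have hPU1 : P U = 1 := by
    have := measure_add_measure_compl (μ := P) hUm
    rw [hUfull, add_zero, measure_univ] at this
    exact this
  have hPUsum : P U = (k : ℝ≥0∞) * P A := by
    rw [hUdef, measure_biUnion_finset₀ ?_ (fun ℓ _ => (hmeasiter ℓ hA).nullMeasurableSet)]
    · rw [Finset.sum_congr rfl (fun ℓ _ => hitermeas ℓ), Finset.sum_const,
        Finset.card_range, nsmul_eq_mul]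
    · intro i hi j hj hij
      exact hdisj i j (Finset.mem_range.mp hi) (Finset.mem_range.mp hj) hij
  have hkPA : (k : ℝ≥0∞) * P A = 1 := by rw [← hPUsum, hPU1]
  have hkne : (k : ℝ≥0∞) ≠ 0 := Nat.cast_ne_zero.mpr hkpos.ne'
  have hPAval : P A = 1 / (k : ℝ≥0∞) :=
    (ENNReal.eq_div_iff hkne (ENNReal.natCast_ne_top k)).mpr hkPA
  -- assemble
  refine ⟨k, hdvd, A, hA, hPAval, hAinv, by rw [← hUdef]; exact hUfull, ?_, ?_⟩
  · -- measure preserving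
    constructor
    · exact hmeas.iterate n
    · rw [Measure.map_smul]
      congr 1
      ext s hs
      rw [Measure.map_apply (hmeas.iterate n) hs, Measure.restrict_apply hs,
        Measure.restrict_apply (hmeasiter n hs)]
      have h1 : P ((σ^[n]) ⁻¹' s ∩ A) = P ((σ^[n]) ⁻¹' s ∩ (σ^[n]) ⁻¹' A) :=
        measure_congr (MeasureTheory.ae_eq_set_inter (ae_eq_refl _) hAinv.symm)
      rw [h1, ← Set.preimage_inter,
        (hmp.iterate n).measure_preimage (hs.inter hA).nullMeasurableSet]
  · -- pre-ergodic
    refine ⟨fun s hs hsinv => Filter.eventuallyConst_set'.mpr ?_⟩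
    have hsinv' : (σ^[n]) ⁻¹' s =ᵐ[P] s := by rw [hsinv]; exact ae_eq_refl _
    rcases atom A hA hAinv rfl s hs hsinv' with h | h
    · left
      rw [ae_eq_empty, Measure.smul_apply, smul_eq_mul, Measure.restrict_apply hs,
        Set.inter_comm]
      rw [h, mul_zero]
    · right
      rw [ae_eq_univ, Measure.smul_apply, smul_eq_mul, Measure.restrict_apply hs.compl]
      have : sᶜ ∩ A = A \ s := by rw [Set.inter_comm, Set.diff_eq]
      rw [this, h, mul_zero]
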